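/- Let n = p_1^{e_1} ⋯ p_r^{e_r} be a product of powers of distinct odd primes. For each i, let K_{p_i^{e_i}} = { a ∈ ℤ/l_iℤ : a is a unit and, for some (equivalently every) positive-integer representative a' of a, D_{a'}(u,1) = u for all u ∈ ℤ/p_i^{e_i}ℤ }, and let K_n = { k ∈ ℤ/w(n)ℤ : k is a unit and, for some (equivalently every) positive-integer representative k' of k, D_{k'}(u,1) = u for all u ∈ ℤ/nℤ }. Let A_1 be the set of tuples (a_1, …, a_r) ∈ K_{p_1^{e_1}} × ⋯ × K_{p_r^{e_r}} such that the simultaneous congruence system x ≡ a_i (mod l_i) for i = 1, …, r has an integer solution. Then the map ρ_1 : A_1 → K_n sending (a_1, …, a_r) to the residue class modulo w(n) of a solution of this system is well defined and bijective. -/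

import Mathlib

open Polynomial
namespace CRTDick
theorem two_step {P : ℕ → Prop} (h0 : P 0) (h1 : P 1)
    (ih : ∀ n, P n → P (n + 1) → P (n + 2)) : ∀ n, P n := by
  have key : ∀ n, P n ∧ P (n + 1) := by
    intro n
    induction n with
    | zero => exact ⟨h0, h1⟩
    | succ k hk => exact ⟨hk.2, ih k hk.1 hk.2⟩
  exact fun n => (key n).1

variable (R : Type*) [CommRing R]

noncomputable def E : ℕ → R[X]
  | 0 => 0
  | 1 => 1
  | n + 2 => X * E (n + 1) - E n

@[simp] theorem E_zero : E R 0 = 0 := rfl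
@[simp] theorem E_one : E R 1 = 1 := rfl
theorem E_add_two (n : ℕ) : E R (n + 2) = X * E R (n + 1) - E R n := rfl

variable {R}
variable {S : Type*} [CommRing S]

theorem map_E (f : R →+* S) : ∀ n, map f (E R n) = E S n := by
  apply two_step
  · simp
  · simp
  · intro n ih1 ih2
    simp [E_add_two, ih1, ih2]

variable (R)

theorem dickson_eq_E_sub_E (m : ℕ) :
    dickson 1 (1 : R) (m + 1) = E R (m + 2) - E R m := by
  induction m using two_step with
  | h0 => simp [E_add_two]
  | h1 => simp [E_add_two, dickson_two]; ring
  | ih n ih1 ih2 =>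
    rw [dickson_add_two, ih1, ih2, E_add_two R (n + 2), E_add_two R n]
    simp only [C_1, one_mul]
    ring

theorem cassini (m : ℕ) : E R m * E R (m + 2) + 1 = E R (m + 1) ^ 2 := by
  induction m with
  | zero => simp
  | succ n ih =>
    have h3 : E R (n + 3) = X * E R (n + 2) - E R (n + 1) := E_add_two R (n + 1)
    have h2 : E R (n + 2) = X * E R (n + 1) - E R n := E_add_two R n
    linear_combination (E R (n + 1)) * h3 + ih - (E R (n + 2)) * h2

/-- (X² - 4) E_m² = D_m² - 4 for m ≥ 1. -/
theorem sq_identity (m : ℕ) :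
    (X ^ 2 - 4) * E R (m + 1) ^ 2 = dickson 1 (1 : R) (m + 1) ^ 2 - 4 := by
  have hD := dickson_eq_E_sub_E R m
  have hC := cassini R m
  have h2 : E R (m + 2) = X * E R (m + 1) - E R m := E_add_two R m
  linear_combination (-(E R (m + 2) - E R m + dickson 1 (1:R) (m+1))) * hD + 4 * hC -
    (X * E R (m+1) + E R (m + 2) + E R m) * h2

/-- 2 D_{l+1} = X D_l + (X²-4) E_l. -/
theorem two_dickson_succ (l : ℕ) :
    2 * dickson 1 (1 : R) (l + 1) = X * dickson 1 (1 : R) l + (X ^ 2 - 4) * E R l := by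
  induction l using two_step with
  | h0 => simp; ring
  | h1 => simp [dickson_two]; ring
  | ih n ih1 ih2 =>
    have hD : dickson 1 (1:R) (n + 3) = X * dickson 1 (1:R) (n + 2) - dickson 1 (1:R) (n+1) := by
      simpa using dickson_add_two 1 (1:R) (n + 1)
    have hD2 : dickson 1 (1:R) (n + 2) = X * dickson 1 (1:R) (n + 1) - dickson 1 (1:R) n := by
      simpa using dickson_add_two 1 (1:R) n
    have hE : E R (n + 2) = X * E R (n + 1) - E R n := E_add_two R n
    linear_combination 2 * hD + (X : R[X]) * ih2 - ih1 - (X:R[X]) * hD2 -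
      ((X:R[X])^2 - 4) * hE
  done

/-- 2 D_{m+l} = D_m D_l + (X²-4) E_m E_l. -/
theorem addition_formula (l m : ℕ) :
    2 * dickson 1 (1 : R) (m + l) =
      dickson 1 (1 : R) m * dickson 1 (1 : R) l + (X ^ 2 - 4) * E R m * E R l := by
  induction m using two_step with
  | h0 => simp; ring
  | h1 =>
    have := two_dickson_succ R l
    rw [show 1 + l = l + 1 by ring]
    simp only [E_one, dickson_one, mul_one]
    linear_combination this
  | ih n ih1 ih2 =>
    have hD : dickson 1 (1:R) (n + 2 + l) =
        X * dickson 1 (1:R) (n + 1 + l) - dickson 1 (1:R) (n + l) := by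
      have := dickson_add_two 1 (1:R) (n + l)
      simpa [show n + l + 2 = n + 2 + l by ring, show n + l + 1 = n + 1 + l by ring] using this
    have hD2 : dickson 1 (1:R) (n + 2) = X * dickson 1 (1:R) (n + 1) - dickson 1 (1:R) n := by
      simpa using dickson_add_two 1 (1:R) n
    have hE : E R (n + 2) = X * E R (n + 1) - E R n := E_add_two R n
    linear_combination 2 * hD + (X:R[X]) * ih2 - ih1 -
      (dickson 1 (1:R) l) * hD2 - ((X:R[X])^2 - 4) * (E R l) * hE

/-- E (a + n + n) + E a = D n * E (a + n). -/
theorem E_shift (n : ℕ) : ∀ a : ℕ,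
    E R (a + n + n) + E R a = dickson 1 (1 : R) n * E R (a + n) := by
  induction n using two_step with
  | h0 => intro a; simp; ring
  | h1 =>
    intro a
    have := E_add_two R a
    simp only [dickson_one]
    linear_combination this
  | ih n ih1 ih2 =>
    intro a
    have k1 := ih2 (a + 2)
    have k2 := ih1 (a + 2)
    have k3 := ih2 a
    rw [show a+2+(n+1)+(n+1) = a+n+n+4 from by ring, show a+2+(n+1) = a+n+3 from by ring] at k1
    rw [show a+2+n+n = a+n+n+2 from by ring, show a+2+n = a+n+2 from by ring] at k2
    rw [show a+(n+1)+(n+1) = a+n+n+2 from by ring, show a+(n+1) = a+n+1 from by ring] at k3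
    rw [show a+(n+2)+(n+2) = a+n+n+4 from by ring, show a+(n+2) = a+n+2 from by ring]
    have hD2 : dickson 1 (1:R) (n + 2) = X * dickson 1 (1:R) (n + 1) - dickson 1 (1:R) n := by
      simpa using dickson_add_two 1 (1:R) n
    have e1 : E R (a+n+3) = X * E R (a+n+2) - E R (a+n+1) := E_add_two R (a+n+1)
    linear_combination k1 + k3 - k2 - (E R (a+n+2)) * hD2 + (dickson 1 (1:R) (n+1)) * e1

theorem E_mul (n : ℕ) : ∀ m, E R (m * n) = (E R m).comp (dickson 1 (1 : R) n) * E R n := by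
  apply two_step
  · simp
  · simp
  · intro m ih1 ih2
    have hs := E_shift R n (m * n)
    have ih2' := ih2
    rw [show (m+1)*n = m*n + n from by ring] at ih2'
    rw [show (m+2)*n = m*n + n + n from by ring, E_add_two R m, sub_comp, mul_comp, X_comp]
    linear_combination hs + (dickson 1 (1:R) n) * ih2' - ih1

theorem E_eval_two : ∀ m : ℕ, eval 2 (E R m) = (m : R) := by
  apply two_step
  · simp
  · simp
  · intro m ih1 ih2
    rw [E_add_two]
    simp only [eval_sub, eval_mul, eval_X, ih1, ih2]
    push_cast
    ring

theorem dickson_eval_two (m : ℕ) : eval 2 (dickson 1 (1 : R) m) = 2 := by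
  have := dickson_one_one_eval_add_inv (1 : R) 1 (mul_one 1) m
  norm_num at this
  exact this

theorem dickson_eval_neg_two (m : ℕ) :
    eval (-2) (dickson 1 (1 : R) m) = (-1) ^ m + (-1) ^ m := by
  have := dickson_one_one_eval_add_inv (-1 : R) (-1) (by ring) m
  norm_num at this ⊢
  exact this


section NumberTheory

/-- Kernel of `ZMod.castHom`. -/
theorem zmod_kernel {a b : ℕ} [NeZero b] (h : a ∣ b) (z : ZMod b)
    (hz : ZMod.castHom h (ZMod a) z = 0) : ∃ c : ZMod b, z = (a : ZMod b) * c := by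
  have hb : b ≠ 0 := NeZero.ne b
  have ha : a ≠ 0 := by
    rintro rfl
    exact hb (Nat.eq_zero_of_zero_dvd h)
  haveI : NeZero a := ⟨ha⟩
  have hm : ((z.val : ℕ) : ZMod b) = z := ZMod.natCast_zmod_val z
  have h2 : ((z.val : ℕ) : ZMod a) = 0 := by
    have := map_natCast (ZMod.castHom h (ZMod a)) z.val
    rw [hm, hz] at this
    exact this.symm
  obtain ⟨c, hc⟩ := (ZMod.natCast_eq_zero_iff _ _).mp h2
  refine ⟨(c : ZMod b), ?_⟩
  rw [← hm, hc]
  push_cast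
  ring

/-- Transfer of polynomial evaluation along a ring hom. -/
theorem hom_eval {R S : Type*} [CommRing R] [CommRing S] (f : R →+* S) (q : R[X]) (u : R) :
    f (eval u q) = eval (f u) (map f q) := by
  rw [eval_map, eval₂_at_apply]

/-- Base case: over `ZMod p`, `D_{(p²-1)/2}` evaluates to `2` everywhere. -/
theorem base_dickson (p : ℕ) [Fact p.Prime] (hp2 : Odd p) (u : ZMod p) :
    eval u (dickson 1 (1 : ZMod p) ((p ^ 2 - 1) / 2)) = 2 := by
  obtain ⟨k, hk⟩ := hp2
  have hppos : 0 < p := (Fact.out : p.Prime).pos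
  have hpge : 2 ≤ p := (Fact.out : p.Prime).two_le
  have hpsq : p ^ 2 = 4 * (k * k) + 4 * k + 1 := by subst hk; ring
  have hp1 : p - 1 = 2 * k := by omega
  have hhalf : (p ^ 2 - 1) / 2 = 2 * (k * k) + 2 * k := by omega
  have hL1 : (p ^ 2 - 1) / 2 = (p - 1) * (k + 1) := by rw [hhalf, hp1]; ring
  have hL2 : (p ^ 2 - 1) / 2 = (p + 1) * k := by
    rw [hhalf, show p + 1 = 2 * k + 2 from by omega]; ring
  have hLeven : Even ((p ^ 2 - 1) / 2) := ⟨k * k + k, by rw [hhalf]; ring⟩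
  have hk2 : k = p / 2 := by omega
  have hpne2 : p ≠ 2 := by omega
  have h2ne : (2 : ZMod p) ≠ 0 := by
    have h2n : ((2 : ℕ) : ZMod p) ≠ 0 := by
      rw [Ne, ZMod.natCast_eq_zero_iff]
      intro hdvd
      have := Nat.le_of_dvd (by norm_num) hdvd
      omega
    simpa using h2n
  by_cases h4 : u ^ 2 - 4 = 0
  · -- u = 2 or u = -2
    have : (u - 2) * (u + 2) = 0 := by linear_combination h4
    rcases mul_eq_zero.mp this with h | h
    · have : u = 2 := by linear_combination h
      rw [this, dickson_eval_two]
    · have : u = -2 := by linear_combination h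
      rw [this, dickson_eval_neg_two, hLeven.neg_one_pow]
      norm_num
  · -- u² ≠ 4
    set t : ZMod p := (u ^ 2 - 4) ^ k with ht
    have htsq : t ^ 2 = 1 := by
      rw [ht, ← pow_mul]
      rw [show k * 2 = p - 1 from by omega]
      exact ZMod.pow_card_sub_one_eq_one h4
    have ht1 : t = 1 ∨ t = -1 := by
      have : (t - 1) * (t + 1) = 0 := by linear_combination htsq
      rcases mul_eq_zero.mp this with h | h
      · left; linear_combination h
      · right; linear_combination h
    rcases ht1 with ht1 | ht1
    · -- u²-4 is a square in ZMod p; work inside ZMod p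
      have hsq : IsSquare (u ^ 2 - 4) := by
        rw [ZMod.euler_criterion p h4, ← hk2]
        exact ht1
      obtain ⟨s, hs⟩ := hsq
      set x : ZMod p := (u + s) / 2 with hx
      set y : ZMod p := (u - s) / 2 with hy
      have hxy : x * y = 1 := by
        rw [hx, hy]
        field_simp
        linear_combination hs
      have hxyu : x + y = u := by
        rw [hx, hy]; field_simp; ring
      have hxne : x ≠ 0 := by
        intro h0; rw [h0, zero_mul] at hxy; exact zero_ne_one hxy
      have hyne : y ≠ 0 := by
        intro h0; rw [h0, mul_zero] at hxy; exact zero_ne_one hxy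
      have heval := dickson_one_one_eval_add_inv x y hxy ((p ^ 2 - 1) / 2)
      rw [hxyu] at heval
      rw [heval, hL1, pow_mul, pow_mul, ZMod.pow_card_sub_one_eq_one hxne,
        ZMod.pow_card_sub_one_eq_one hyne]
      norm_num
    · -- u²-4 is a nonsquare; go to GaloisField p 2
      set F := GaloisField p 2 with hF
      haveI : Fintype F := Fintype.ofFinite F
      have hcard : Fintype.card F = p ^ 2 := by
        rw [← Nat.card_eq_fintype_card]
        exact GaloisField.card p 2 (by norm_num)
      have hchar : ringChar F ≠ 2 := by
        rw [ringChar.eq F p]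
        exact hpne2
      set φ : ZMod p →+* F := (algebraMap (ZMod p) F) with hφ
      have hinj : Function.Injective φ := φ.injective
      have h2F : (2 : F) = φ 2 := by rw [map_ofNat]
      have h2Fne : (2 : F) ≠ 0 := by
        rw [h2F]
        intro h0
        exact h2ne (hinj (by rw [h0, map_zero]))
      have hane : φ (u ^ 2 - 4) ≠ 0 := by
        intro h0
        exact h4 (hinj (by rw [h0, map_zero]))
      -- φ(u²-4) is a square in F
      have hpow1 : φ (u ^ 2 - 4) ^ (Fintype.card F / 2) = 1 := by
        rw [hcard, show p ^ 2 / 2 = (p ^ 2 - 1) / 2 from by omega, hL2, mul_comm (p + 1) k,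
          pow_mul, ← map_pow, ← ht, ht1, map_neg, map_one]
        rw [show p + 1 = 2 * (k + 1) from by omega, pow_mul]
        norm_num
      have hsq : IsSquare (φ (u ^ 2 - 4)) := (FiniteField.isSquare_iff hchar hane).mpr hpow1
      obtain ⟨s, hs⟩ := hsq
      set x : F := (φ u + s) / 2 with hx
      set y : F := (φ u - s) / 2 with hy
      have hs' : s * s = φ u * φ u - 4 := by
        rw [← hs, map_sub, map_pow, map_ofNat]; ring
      have hxy : x * y = 1 := by
        rw [hx, hy]
        rw [div_mul_div_comm, div_eq_one_iff_eq (mul_ne_zero h2Fne h2Fne)]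
        linear_combination -hs'
      have hxyu : x + y = φ u := by
        rw [hx, hy]; rw [← add_div, div_eq_iff h2Fne]
        try ring
      -- Frobenius computations
      haveI : CharP F p := inferInstance
      have hsp : s ^ p = -s := by
        have h1 : s ^ p = s * (s * s) ^ k := by
          rw [← pow_two, ← pow_mul, ← pow_succ']
          exact congrArg (fun m => s ^ m) hk
        rw [h1, ← hs, ← map_pow, ← ht, ht1]
        simp
        ring
      have hup : (φ u) ^ p = φ u := by
        rw [← map_pow, ZMod.pow_card]
      have h2p : (2 : F) ^ p = 2 := by
        rw [h2F, ← map_pow, ZMod.pow_card]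
      have hxp : x ^ p = y := by
        rw [hx, hy, div_pow, add_pow_char, hsp, hup, h2p]
        ring
      have hxppow : x ^ (p + 1) = 1 := by
        rw [pow_succ, hxp, mul_comm, hxy]
      have hxl : x ^ ((p ^ 2 - 1) / 2) = 1 := by
        rw [hL2, pow_mul, hxppow, one_pow]
      have hyl : y ^ ((p ^ 2 - 1) / 2) = 1 := by
        have := congrArg (fun z => z ^ ((p ^ 2 - 1) / 2)) hxy
        simp only [mul_pow, one_pow] at this
        rw [hxl, one_mul] at this
        exact this
      have heval := dickson_one_one_eval_add_inv x y hxy ((p ^ 2 - 1) / 2)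
      rw [hxyu, hxl, hyl] at heval
      -- transfer back along φ
      have htrans : φ (eval u (dickson 1 (1 : ZMod p) ((p ^ 2 - 1) / 2))) =
          eval (φ u) (dickson 1 (1 : F) ((p ^ 2 - 1) / 2)) := by
        rw [hom_eval, map_dickson, map_one]
      apply hinj
      rw [htrans, heval, ← h2F]
      norm_num

theorem base_dickson' (p : ℕ) [Fact p.Prime] (hp2 : Odd p) (N : ℕ) (hN : N = p)
    (u : ZMod N) : eval u (dickson 1 (1 : ZMod N) ((p ^ 2 - 1) / 2)) = 2 := by
  subst hN
  exact base_dickson _ hp2 u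

theorem base_E (p : ℕ) [Fact p.Prime] (hp2 : Odd p) (u : ZMod p) :
    (u ^ 2 - 4) * eval u (E (ZMod p) ((p ^ 2 - 1) / 2)) = 0 := by
  have hpge : 2 ≤ p := (Fact.out : p.Prime).two_le
  have hp3 : 3 ≤ p := by obtain ⟨k, hk⟩ := hp2; omega
  have hL1 : 1 ≤ (p ^ 2 - 1) / 2 := by
    have : 3 * 3 ≤ p * p := Nat.mul_le_mul hp3 hp3
    have h2 : p ^ 2 = p * p := by ring
    omega
  obtain ⟨m, hm⟩ : ∃ m, (p ^ 2 - 1) / 2 = m + 1 := ⟨(p ^ 2 - 1) / 2 - 1, by omega⟩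
  have hid := congrArg (Polynomial.eval u) (sq_identity (ZMod p) m)
  simp only [eval_mul, eval_sub, eval_pow, eval_X, eval_ofNat] at hid
  rw [← hm, base_dickson p hp2 u] at hid
  norm_num at hid
  rcases hid with h | h
  · rw [h, zero_mul]
  · rw [h, mul_zero]

theorem base_E' (p : ℕ) [Fact p.Prime] (hp2 : Odd p) (N : ℕ) (hN : N = p)
    (u : ZMod N) : (u ^ 2 - 4) * eval u (E (ZMod N) ((p ^ 2 - 1) / 2)) = 0 := by
  subst hN
  exact base_E _ hp2 u

theorem deriv_two_dvd (p : ℕ) [Fact p.Prime] :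
    (p : ℤ) ∣ eval 2 (derivative (dickson 1 (1 : ℤ) p)) := by
  rw [← ZMod.intCast_zmod_eq_zero_iff_dvd]
  have h := hom_eval (Int.castRingHom (ZMod p)) (derivative (dickson 1 (1 : ℤ) p)) 2
  rw [← derivative_map, map_dickson, map_one, map_ofNat] at h
  rw [show ((eval 2 (derivative (dickson 1 (1:ℤ) p)) : ℤ) : ZMod p)
      = (Int.castRingHom (ZMod p)) (eval 2 (derivative (dickson 1 (1:ℤ) p))) from rfl, h,
    dickson_one_one_charP, derivative_X_pow]
  simp

/-- Joint claims A and B, by induction on `e`. -/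
theorem dick_AB (p : ℕ) [Fact p.Prime] (hp2 : Odd p) :
    ∀ e, 1 ≤ e →
    (∀ u : ZMod (p ^ e), eval u (dickson 1 1 (p ^ (e-1) * ((p ^ 2 - 1) / 2))) = 2) ∧
    (∀ u : ZMod (p ^ e), (u ^ 2 - 4) *
        eval u (E (ZMod (p ^ e)) (p ^ (e-1) * ((p ^ 2 - 1) / 2))) = 0) := by
  have hpge : 2 ≤ p := (Fact.out : p.Prime).two_le
  have hp3 : 3 ≤ p := by
    obtain ⟨k, hk⟩ := hp2; omega
  have hL1 : 1 ≤ (p ^ 2 - 1) / 2 := by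
    have : 3 * 3 ≤ p * p := Nat.mul_le_mul hp3 hp3
    have h2 : p ^ 2 = p * p := by ring
    omega
  intro e he
  induction e, he using Nat.le_induction with
  | base =>
    constructor
    · intro u
      rw [show p ^ (1 - 1) * ((p ^ 2 - 1) / 2) = (p ^ 2 - 1) / 2 from by simp]
      exact base_dickson' p hp2 (p ^ 1) (pow_one p) u
    · intro u
      rw [show p ^ (1 - 1) * ((p ^ 2 - 1) / 2) = (p ^ 2 - 1) / 2 from by simp]
      exact base_E' p hp2 (p ^ 1) (pow_one p) u
  | succ e he IH =>
    have hpne : p ≠ 0 := by omega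
    haveI : NeZero (p ^ (e + 1)) := ⟨pow_ne_zero _ hpne⟩
    have dvd1 : p ^ e ∣ p ^ (e + 1) := pow_dvd_pow p (Nat.le_succ e)
    have dvdp : p ∣ p ^ (e + 1) := dvd_pow_self p (Nat.succ_ne_zero e)
    set lE := p ^ (e - 1) * ((p ^ 2 - 1) / 2) with hlE
    have hsplit : p ^ (e + 1 - 1) * ((p ^ 2 - 1) / 2) = p * lE := by
      rw [hlE, Nat.add_sub_cancel, ← mul_assoc, ← pow_succ', show e - 1 + 1 = e from by omega]
    set φ := ZMod.castHom dvd1 (ZMod (p ^ e)) with hφ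
    -- the evaluation of D_lE lifts 2
    have hv : ∀ u : ZMod (p ^ (e + 1)), ∃ c : ZMod (p ^ (e + 1)),
        eval u (dickson 1 (1 : ZMod (p ^ (e + 1))) lE) = 2 + ((p ^ e : ℕ) : ZMod (p ^ (e+1))) * c := by
      intro u
      have h0 : φ (eval u (dickson 1 (1 : ZMod (p ^ (e + 1))) lE) - 2) = 0 := by
        rw [map_sub, hom_eval, map_dickson, map_one, map_ofNat, IH.1 (φ u)]
        ring
      obtain ⟨c, hc⟩ := zmod_kernel dvd1 _ h0
      exact ⟨c, by linear_combination hc⟩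
    have hcast0 : ((p ^ e : ℕ) : ZMod (p ^ (e+1))) ^ 2 = 0 := by
      rw [← Nat.cast_pow, ← pow_mul, ZMod.natCast_eq_zero_iff]
      exact pow_dvd_pow p (by omega)
    have hppe : ((p : ℕ) : ZMod (p ^ (e+1))) * ((p ^ e : ℕ) : ZMod (p ^ (e+1))) = 0 := by
      rw [← Nat.cast_mul, ← pow_succ', ZMod.natCast_self]
    constructor
    · -- claim A at e+1
      intro u
      rw [hsplit, dickson_one_one_mul, eval_comp]
      obtain ⟨c, hc⟩ := hv u
      rw [hc]
      obtain ⟨kk, hbin⟩ := binomExpansion (dickson 1 (1 : ZMod (p ^ (e+1))) p) 2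
        (((p ^ e : ℕ) : ZMod (p ^ (e+1))) * c)
      rw [hbin, dickson_eval_two]
      -- derivative term vanishes
      obtain ⟨c0, hc0⟩ := deriv_two_dvd p
      have htr : eval 2 (derivative (dickson 1 (1 : ZMod (p ^ (e+1))) p))
          = ((eval 2 (derivative (dickson 1 (1 : ℤ) p)) : ℤ) : ZMod (p ^ (e+1))) := by
        have h := hom_eval (Int.castRingHom (ZMod (p ^ (e+1)))) (derivative (dickson 1 (1 : ℤ) p)) 2
        rw [← derivative_map, map_dickson, map_one, map_ofNat] at h
        exact h.symm
      have hder : eval 2 (derivative (dickson 1 (1 : ZMod (p ^ (e+1))) p)) *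
          (((p ^ e : ℕ) : ZMod (p ^ (e+1))) * c) = 0 := by
        rw [htr, hc0]
        calc (((p : ℤ) * c0 : ℤ) : ZMod (p ^ (e+1))) * (((p ^ e : ℕ) : ZMod (p ^ (e+1))) * c)
            = (((p : ℕ) : ZMod (p ^ (e+1))) * ((p ^ e : ℕ) : ZMod (p ^ (e+1)))) *
              (((c0 : ℤ) : ZMod (p ^ (e+1))) * c) := by push_cast; ring
          _ = 0 := by rw [hppe, zero_mul]
      rw [hder]
      have hy2 : (((p ^ e : ℕ) : ZMod (p ^ (e+1))) * c) ^ 2 = 0 := by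
        rw [mul_pow, hcast0, zero_mul]
      rw [hy2, mul_zero]
      ring
    · -- claim B at e+1
      intro u
      rw [hsplit, E_mul (ZMod (p ^ (e + 1))) lE p, eval_mul, eval_comp]
      -- first factor: z1
      have h0 : φ ((u ^ 2 - 4) * eval u (E (ZMod (p ^ (e+1))) lE)) = 0 := by
        rw [map_mul, map_sub, map_pow, map_ofNat, hom_eval, map_E]
        exact IH.2 (φ u)
      obtain ⟨c1, hc1⟩ := zmod_kernel dvd1 _ h0
      -- second factor: z2
      set v := eval u (dickson 1 (1 : ZMod (p ^ (e+1))) lE) with hvdef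
      set ψ := ZMod.castHom dvdp (ZMod p) with hψ
      have hψv : ψ v = 2 := by
        obtain ⟨c, hc⟩ := hv u
        have hz : ((p ^ e : ℕ) : ZMod p) = 0 :=
          (ZMod.natCast_eq_zero_iff _ _).mpr (dvd_pow_self p (by omega))
        rw [hvdef, hc, map_add, map_mul, map_ofNat, map_natCast, hz, zero_mul, add_zero]
      have hψz2 : ψ (eval v (E (ZMod (p ^ (e+1))) p)) = 0 := by
        rw [hom_eval, map_E, hψv, E_eval_two, ZMod.natCast_self]
      obtain ⟨c2, hc2⟩ := zmod_kernel dvdp _ hψz2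
      calc (u ^ 2 - 4) * (eval v (E (ZMod (p ^ (e+1))) p) * eval u (E (ZMod (p ^ (e+1))) lE))
          = eval v (E (ZMod (p ^ (e+1))) p) *
            ((u ^ 2 - 4) * eval u (E (ZMod (p ^ (e+1))) lE)) := by ring
        _ = (((p : ℕ) : ZMod (p ^ (e+1))) * c2) * (((p ^ e : ℕ) : ZMod (p ^ (e+1))) * c1) := by
            rw [hc1, hc2]
        _ = (((p : ℕ) : ZMod (p ^ (e+1))) * ((p ^ e : ℕ) : ZMod (p ^ (e+1)))) * (c2 * c1) := by
            ring
        _ = 0 := by rw [hppe, zero_mul]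

/-- Periodicity: `D_{m+l} = D_m` on `ZMod (p^e)` where `l = p^(e-1) (p²-1)/2`. -/
theorem dickson_period (p : ℕ) [Fact p.Prime] (hp2 : Odd p) (e : ℕ) (he : 1 ≤ e) (m : ℕ)
    (u : ZMod (p ^ e)) :
    eval u (dickson 1 (1 : ZMod (p ^ e)) (m + p ^ (e - 1) * ((p ^ 2 - 1) / 2)))
      = eval u (dickson 1 (1 : ZMod (p ^ e)) m) := by
  set lE := p ^ (e - 1) * ((p ^ 2 - 1) / 2) with hlE
  have hAB := dick_AB p hp2 e he
  have hid := congrArg (Polynomial.eval u) (addition_formula (ZMod (p ^ e)) lE m)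
  simp only [eval_mul, eval_add, eval_sub, eval_pow, eval_X, eval_ofNat] at hid
  rw [hAB.1 u] at hid
  have hz : eval u (E (ZMod (p ^ e)) m) * ((u ^ 2 - 4) * eval u (E (ZMod (p ^ e)) lE)) = 0 := by
    rw [hAB.2 u, mul_zero]
  have h2 : (2 : ZMod (p ^ e)) * eval u (dickson 1 (1 : ZMod (p ^ e)) (m + lE))
      = 2 * eval u (dickson 1 (1 : ZMod (p ^ e)) m) := by
    linear_combination hid + hz
  have hunit : IsUnit (2 : ZMod (p ^ e)) := by
    have : IsUnit ((2 : ℕ) : ZMod (p ^ e)) := by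
      rw [ZMod.isUnit_iff_coprime]
      exact Nat.Coprime.pow_right e (Nat.coprime_two_left.mpr hp2)
    simpa using this
  exact hunit.mul_left_cancel h2

/-- Congruence invariance of Dickson evaluations on `ZMod (p^e)`. -/
theorem dickson_congr (p : ℕ) [Fact p.Prime] (hp2 : Odd p) (e : ℕ) (he : 1 ≤ e) (a b : ℕ)
    (hab : a ≡ b [MOD p ^ (e - 1) * ((p ^ 2 - 1) / 2)]) (u : ZMod (p ^ e)) :
    eval u (dickson 1 (1 : ZMod (p ^ e)) a) = eval u (dickson 1 (1 : ZMod (p ^ e)) b) := by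
  set lE := p ^ (e - 1) * ((p ^ 2 - 1) / 2) with hlE
  have key : ∀ (c a : ℕ), eval u (dickson 1 (1 : ZMod (p ^ e)) (a + lE * c))
      = eval u (dickson 1 (1 : ZMod (p ^ e)) a) := by
    intro c
    induction c with
    | zero => intro a; simp
    | succ d ih =>
      intro a
      rw [show a + lE * (d + 1) = (a + lE * d) + lE from by ring, dickson_period p hp2 e he,
        ih a]
  -- reduce to the case a ≤ b
  rcases le_total a b with h | h
  · obtain ⟨c, hc⟩ := (Nat.modEq_iff_dvd' h).mp hab
    have : b = a + lE * c := by omega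
    rw [this, key c a]
  · obtain ⟨c, hc⟩ := (Nat.modEq_iff_dvd' h).mp hab.symm
    have : a = b + lE * c := by omega
    rw [this, key c b]

end NumberTheory

/-- Product of pairwise coprime divisors divides. -/
theorem nat_prod_dvd {ι : Type*} [DecidableEq ι] (s : Finset ι) (f : ι → ℕ) (m : ℕ)
    (hc : ∀ i ∈ s, ∀ j ∈ s, i ≠ j → Nat.Coprime (f i) (f j)) (h : ∀ i ∈ s, f i ∣ m) :
    (∏ i ∈ s, f i) ∣ m := by
  induction s using Finset.induction_on with
  | empty => simpa using one_dvd m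
  | @insert a s' ha ih =>
    rw [Finset.prod_insert ha]
    have hcop : Nat.Coprime (f a) (∏ i ∈ s', f i) := by
      apply Nat.Coprime.prod_right
      intro i hi
      exact hc a (Finset.mem_insert_self a s') i (Finset.mem_insert_of_mem hi)
        (by rintro rfl; exact ha hi)
    exact hcop.mul_dvd_of_dvd_of_dvd (h a (Finset.mem_insert_self a s'))
      (ih (fun i hi j hj hij => hc i (Finset.mem_insert_of_mem hi) j
        (Finset.mem_insert_of_mem hj) hij) (fun i hi => h i (Finset.mem_insert_of_mem hi)))

end CRTDick

open CRTDick

theorem crt_bijection_kernel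
    (r : ℕ) (p ee : Fin r → ℕ)
    (hp : ∀ i, Nat.Prime (p i)) (hodd : ∀ i, Odd (p i)) (hmono : StrictMono p)
    (hee : ∀ i, 1 ≤ ee i)
    (n : ℕ) (hn : n = ∏ i, p i ^ ee i)
    (l : Fin r → ℕ) (hl : ∀ i, l i = p i ^ (ee i - 1) * ((p i ^ 2 - 1) / 2))
    (w : ℕ) (hw : w = Finset.univ.lcm l)
    (K : ∀ i, Set (ZMod (l i)))
    (hK : ∀ i, K i = {a : ZMod (l i) | IsUnit a ∧ ∃ a' : ℕ, 0 < a' ∧ (a' : ZMod (l i)) = a ∧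
      ∀ u : ZMod (p i ^ ee i), Polynomial.eval u (Polynomial.dickson 1 1 a') = u})
    (Kn : Set (ZMod w))
    (hKn : Kn = {c : ZMod w | IsUnit c ∧ ∃ k' : ℕ, 0 < k' ∧ (k' : ZMod w) = c ∧
      ∀ u : ZMod n, Polynomial.eval u (Polynomial.dickson 1 1 k') = u})
    (A : Set (∀ i, ZMod (l i)))
    (hA : A = {a : ∀ i, ZMod (l i) | (∀ i, a i ∈ K i) ∧ ∃ x : ℤ, ∀ i, (x : ZMod (l i)) = a i}) :
    ∃ ρ : A → Kn,
      (∀ (a : A) (x : ℤ), (∀ i, (x : ZMod (l i)) = (a : ∀ i, ZMod (l i)) i) →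
        (ρ a : ZMod w) = (x : ZMod w)) ∧
      Function.Bijective ρ := by
  classical
  -- basic positivity facts
  have hp3 : ∀ i, 3 ≤ p i := by
    intro i
    have h2 := (hp i).two_le
    obtain ⟨k, hk⟩ := hodd i
    omega
  have hlpos : ∀ i, 0 < l i := by
    intro i
    rw [hl i]
    have h9 : 9 ≤ p i * p i := Nat.mul_le_mul (hp3 i) (hp3 i)
    have hsq : p i ^ 2 = p i * p i := pow_two (p i)
    have : 0 < (p i ^ 2 - 1) / 2 := by omega
    exact Nat.mul_pos (pow_pos (by have := hp3 i; omega) _) this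
  have hwne : w ≠ 0 := by
    intro h0
    rw [hw] at h0
    obtain ⟨i, -, hi⟩ := Finset.lcm_eq_zero_iff.mp h0
    exact (hlpos i).ne' hi
  haveI : NeZero w := ⟨hwne⟩
  have hlw : ∀ i, l i ∣ w := by
    intro i
    rw [hw]
    exact Finset.dvd_lcm (Finset.mem_univ i)
  have hnpos : 0 < n := by
    rw [hn]
    exact Finset.prod_pos fun i _ => pow_pos (by have := hp3 i; omega) _
  haveI : NeZero n := ⟨hnpos.ne'⟩
  have hdvdn : ∀ i, p i ^ ee i ∣ n := by
    intro i
    rw [hn]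
    exact Finset.dvd_prod_of_mem _ (Finset.mem_univ i)
  haveI : ∀ i, NeZero (p i ^ ee i) :=
    fun i => ⟨pow_ne_zero _ (by have := hp3 i; omega)⟩
  -- congruence transfer lemmas
  have congr_w : ∀ x y : ℤ, (∀ i, (x : ZMod (l i)) = (y : ZMod (l i))) →
      (x : ZMod w) = (y : ZMod w) := by
    intro x y hxy
    rw [ZMod.intCast_eq_intCast_iff, Int.modEq_iff_dvd]
    have habs : ∀ i, l i ∣ (y - x).natAbs := by
      intro i
      have hxyi := hxy i
      rw [ZMod.intCast_eq_intCast_iff, Int.modEq_iff_dvd] at hxyi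
      simpa using Int.natAbs_dvd_natAbs.mpr hxyi
    have hwabs : w ∣ (y - x).natAbs := by
      rw [hw]
      exact Finset.lcm_dvd fun i _ => habs i
    exact Int.natAbs_dvd_natAbs.mp (by simpa using hwabs)
  have congr_down : ∀ (d : ℕ), d ∣ w → ∀ x y : ℤ, (x : ZMod w) = (y : ZMod w) →
      (x : ZMod d) = (y : ZMod d) := by
    intro d hd x y hxy
    rw [ZMod.intCast_eq_intCast_iff] at hxy ⊢
    exact hxy.of_dvd (Int.natCast_dvd_natCast.mpr hd)
  -- the per-prime-power Dickson property from membership in K i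
  have perK : ∀ (i : Fin r) (k' : ℕ) (ai : ZMod (l i)), ai ∈ K i → (k' : ZMod (l i)) = ai →
      ∀ v : ZMod (p i ^ ee i), Polynomial.eval v (Polynomial.dickson 1 1 k') = v := by
    intro i k' ai hai hk' v
    haveI : Fact (p i).Prime := ⟨hp i⟩
    rw [hK i] at hai
    obtain ⟨-, a', -, ha'cast, ha'dick⟩ := hai
    have hmod : a' ≡ k' [MOD p i ^ (ee i - 1) * ((p i ^ 2 - 1) / 2)] := by
      rw [← hl i, ← ZMod.natCast_eq_natCast_iff]
      rw [ha'cast, hk']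
    rw [← dickson_congr (p i) (hodd i) (ee i) (hee i) a' k' hmod v]
    exact ha'dick v
  -- CRT injectivity
  have crt : ∀ z : ZMod n, (∀ i, ZMod.castHom (hdvdn i) (ZMod (p i ^ ee i)) z = 0) → z = 0 := by
    intro z hz
    have hvz : ∀ i, p i ^ ee i ∣ z.val := by
      intro i
      have h1 := hz i
      rw [← ZMod.natCast_zmod_val z, map_natCast, ZMod.natCast_eq_zero_iff] at h1
      exact h1
    have hcop : ∀ i ∈ Finset.univ, ∀ j ∈ Finset.univ, i ≠ j →
        Nat.Coprime (p i ^ ee i) (p j ^ ee j) := by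
      intro i _ j _ hij
      exact ((Nat.coprime_primes (hp i) (hp j)).mpr fun h => hij (hmono.injective h)).pow _ _
    have hnz : n ∣ z.val := by
      have hh := nat_prod_dvd Finset.univ (fun i => p i ^ ee i) z.val hcop fun i _ => hvz i
      rw [← hn] at hh
      exact hh
    rw [← ZMod.natCast_zmod_val z, ZMod.natCast_eq_zero_iff]
    exact hnz
  -- Dickson property mod n from the per-prime-power property
  have dicksonN : ∀ k' : ℕ, (∀ i, ∀ v : ZMod (p i ^ ee i),
      Polynomial.eval v (Polynomial.dickson 1 1 k') = v) →
      ∀ u : ZMod n, Polynomial.eval u (Polynomial.dickson 1 1 k') = u := by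
    intro k' hper u
    have hsub := crt (Polynomial.eval u (Polynomial.dickson 1 1 k') - u) ?_
    · linear_combination hsub
    · intro i
      rw [map_sub, hom_eval, map_dickson, map_one, hper i, sub_self]
  -- membership in Kn for suitable naturals
  have memKn : ∀ k' : ℕ, 0 < k' → (∀ i, (∃ ai ∈ K i, (k' : ZMod (l i)) = ai)) →
      ((k' : ℕ) : ZMod w) ∈ Kn := by
    intro k' hk'pos hk'K
    rw [hKn]
    refine ⟨?_, k', hk'pos, rfl, ?_⟩
    · rw [ZMod.isUnit_iff_coprime]
      have hwprod : w ∣ ∏ i, l i := by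
        rw [hw]
        exact Finset.lcm_dvd fun i _ => Finset.dvd_prod_of_mem _ (Finset.mem_univ i)
      have : Nat.Coprime k' (∏ i, l i) := by
        apply Nat.Coprime.prod_right
        intro i _
        obtain ⟨ai, hai, hcast⟩ := hk'K i
        have hu : IsUnit ((k' : ℕ) : ZMod (l i)) := by
          rw [hcast]
          rw [hK i] at hai
          exact hai.1
        exact (ZMod.isUnit_iff_coprime k' (l i)).mp hu
      exact Nat.Coprime.coprime_dvd_right hwprod this
    · apply dicksonN
      intro i
      obtain ⟨ai, hai, hcast⟩ := hk'K i
      exact perK i k' ai hai hcast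
  -- build the map
  have main : ∀ a : A, ∃ c : Kn, ∀ x : ℤ,
      (∀ i, (x : ZMod (l i)) = (a : ∀ i, ZMod (l i)) i) → (c : ZMod w) = (x : ZMod w) := by
    rintro ⟨a, ha⟩
    rw [hA] at ha
    obtain ⟨haK, x0, hx0⟩ := ha
    -- positive natural representative of x0 mod w
    set k' : ℕ := (x0 % (w : ℤ)).toNat + w with hk'def
    have hx0w : ((k' : ℕ) : ℤ) = x0 % (w : ℤ) + w := by
      rw [hk'def]
      push_cast
      rw [Int.toNat_of_nonneg (Int.emod_nonneg x0 (by exact_mod_cast hwne))]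
    have hk'pos : 0 < k' := by
      have : 0 < w := Nat.pos_of_ne_zero hwne
      omega
    have hk'w : ((k' : ℤ) : ZMod w) = (x0 : ZMod w) := by
      rw [hx0w]
      push_cast
      rw [ZMod.natCast_self, add_zero]
    have hk'li : ∀ i, ((k' : ℕ) : ZMod (l i)) = a i := by
      intro i
      have h1 : ((k' : ℤ) : ZMod (l i)) = (x0 : ZMod (l i)) :=
        congr_down (l i) (hlw i) _ _ hk'w
      rw [← hx0 i, ← h1]
      push_cast
      ring
    have hmem : ((k' : ℕ) : ZMod w) ∈ Kn := by
      apply memKn k' hk'pos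
      intro i
      exact ⟨a i, haK i, hk'li i⟩
    refine ⟨⟨(k' : ZMod w), hmem⟩, ?_⟩
    intro x hx
    have hx' : ∀ i, (x : ZMod (l i)) = a i := hx
    show ((k' : ℕ) : ZMod w) = (x : ZMod w)
    have : ∀ i, (((k' : ℕ) : ℤ) : ZMod (l i)) = (x : ZMod (l i)) := by
      intro i
      rw [hx' i, ← hk'li i]
      push_cast
      ring
    have h2 := congr_w _ _ this
    rw [← h2]
    push_cast
    ring
  choose ρ hρ using main
  refine ⟨ρ, hρ, ?_, ?_⟩
  · -- injective
    intro a b hab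
    have hA' : ∀ z : ∀ i, ZMod (l i), z ∈ A ↔
        ((∀ i, z i ∈ K i) ∧ ∃ x : ℤ, ∀ i, (x : ZMod (l i)) = z i) := by
      intro z
      rw [hA]
      exact Iff.rfl
    obtain ⟨-, xa, hxa⟩ := (hA' _).mp a.2
    obtain ⟨-, xb, hxb⟩ := (hA' _).mp b.2
    have hxa' : ∀ i, (xa : ZMod (l i)) = (a : ∀ i, ZMod (l i)) i := hxa
    have hxb' : ∀ i, (xb : ZMod (l i)) = (b : ∀ i, ZMod (l i)) i := hxb
    have h1 := hρ a xa hxa'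
    have h2 := hρ b xb hxb'
    have hxab : (xa : ZMod w) = (xb : ZMod w) := by
      rw [← h1, ← h2, hab]
    apply Subtype.ext
    funext i
    have := congr_down (l i) (hlw i) _ _ hxab
    rw [hxa' i, hxb' i] at this
    exact this
  · -- surjective
    rintro ⟨c, hc⟩
    have hc2 := hc
    rw [hKn] at hc2
    obtain ⟨hcu, k', hk'pos, hk'c, hk'dick⟩ := hc2
    -- the tuple of residues
    set a : ∀ i, ZMod (l i) := fun i => (k' : ZMod (l i)) with hadef
    have haK : ∀ i, a i ∈ K i := by
      intro i
      rw [hK i]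
      constructor
      · rw [hadef]
        rw [ZMod.isUnit_iff_coprime]
        have hu : Nat.Coprime k' w := by
          apply (ZMod.isUnit_iff_coprime k' w).mp
          rw [hk'c]
          exact hcu
        exact Nat.Coprime.coprime_dvd_right (hlw i) hu
      · refine ⟨k', hk'pos, rfl, ?_⟩
        intro u
        have h := congrArg (ZMod.castHom (hdvdn i) (ZMod (p i ^ ee i)))
          (hk'dick ((u.val : ℕ) : ZMod n))
        rw [hom_eval, map_dickson, map_one, map_natCast, ZMod.natCast_zmod_val] at h
        exact h
    have hmemA : a ∈ A := by
      rw [hA]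
      refine ⟨haK, (k' : ℤ), ?_⟩
      intro i
      show ((k' : ℤ) : ZMod (l i)) = (k' : ZMod (l i))
      push_cast
      ring
    refine ⟨⟨a, hmemA⟩, ?_⟩
    apply Subtype.ext
    have h1 := hρ ⟨a, hmemA⟩ (k' : ℤ) ?_
    · show (ρ ⟨a, hmemA⟩ : ZMod w) = c
      rw [h1, ← hk'c]
      push_cast
      ring
    · intro i
      show ((k' : ℤ) : ZMod (l i)) = (k' : ZMod (l i))
      push_cast
      ring
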